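/- The polynomial H(x,y,z) = x² + y² - (1/2)x³ - (1/2)x²y + 2x²z - (3/2)xz² - xy² + y²z - (1/2)yz² - (1/2)x³z + (5/4)x²z² + (1/2)x²y² - (3/2)xz³ + (1/2)y²z² - yz³ + xyz + (1/8)x⁴ - x²yz - xy²z + 2xyz² + (5/8)z⁴ is a first integral of the vector field X = (-v + h)∂/∂u + (u + h)∂/∂v + (-w + h)∂/∂w with h(u,v,w) = (1/4)u² - (1/2)v² - (5/4)w² + (1/2)uw + vw, i.e., XH ≡ 0 as polynomials in ℝ[u,v,w] (with (x,y,z) identified with (u,v,w)). -/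

import Mathlib

noncomputable def h0 (u v w : ℝ) : ℝ :=
  (1/4)*u^2 - (1/2)*v^2 - (5/4)*w^2 + (1/2)*u*w + v*w

noncomputable def H0 (x y z : ℝ) : ℝ :=
  x^2 + y^2 - (1/2)*x^3 - (1/2)*x^2*y + 2*x^2*z - (3/2)*x*z^2 - x*y^2 + y^2*z
  - (1/2)*y*z^2 - (1/2)*x^3*z + (5/4)*x^2*z^2 + (1/2)*x^2*y^2 - (3/2)*x*z^3
  + (1/2)*y^2*z^2 - y*z^3 + x*y*z + (1/8)*x^4 - x^2*y*z - x*y^2*z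
  + 2*x*y*z^2 + (5/8)*z^4

lemma quartic_hasDerivAt (A B C D E s : ℝ) :
    HasDerivAt (fun t : ℝ => A*t^4 + B*t^3 + C*t^2 + D*t + E)
      (4*A*s^3 + 3*B*s^2 + 2*C*s + D) s := by
  have h4 := (hasDerivAt_pow 4 s).const_mul A
  have h3 := (hasDerivAt_pow 3 s).const_mul B
  have h2 := (hasDerivAt_pow 2 s).const_mul C
  have h1 := (hasDerivAt_id s).const_mul D
  have := (((h4.add h3).add h2).add h1).add_const E
  refine this.congr_deriv ?_
  push_cast
  ring

lemma quartic_deriv (A B C D E s : ℝ) :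
    deriv (fun t : ℝ => A*t^4 + B*t^3 + C*t^2 + D*t + E) s
      = 4*A*s^3 + 3*B*s^2 + 2*C*s + D :=
  (quartic_hasDerivAt A B C D E s).deriv

/-- H is a first integral of X = (-v+h)∂u + (u+h)∂v + (-w+h)∂w. -/
theorem stmt_0 : ∀ u v w : ℝ,
    (-v + h0 u v w) * deriv (fun s => H0 s v w) u
    + (u + h0 u v w) * deriv (fun s => H0 u s w) v
    + (-w + h0 u v w) * deriv (fun s => H0 u v s) w = 0 := by
  intro u v w
  have e1 : (fun s => H0 s v w)
      = (fun t : ℝ => (1/8)*t^4 + (-(1/2) - (1/2)*w)*t^3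
        + (1 - (1/2)*v + 2*w + (5/4)*w^2 + (1/2)*v^2 - v*w)*t^2
        + (-(3/2)*w^2 - v^2 - (3/2)*w^3 + v*w - v^2*w + 2*v*w^2)*t
        + (v^2 + v^2*w - (1/2)*v*w^2 + (1/2)*v^2*w^2 - v*w^3 + (5/8)*w^4)) := by
    funext t; unfold H0; ring
  have e2 : (fun s => H0 u s w)
      = (fun t : ℝ => 0*t^4 + 0*t^3
        + (1 - u + w + (1/2)*u^2 + (1/2)*w^2 - u*w)*t^2
        + (-(1/2)*u^2 - (1/2)*w^2 - w^3 + u*w - u^2*w + 2*u*w^2)*t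
        + (u^2 - (1/2)*u^3 + 2*u^2*w - (3/2)*u*w^2 - (1/2)*u^3*w + (5/4)*u^2*w^2
          - (3/2)*u*w^3 + (1/8)*u^4 + (5/8)*w^4)) := by
    funext t; unfold H0; ring
  have e3 : (fun s => H0 u v s)
      = (fun t : ℝ => (5/8)*t^4 + (-(3/2)*u - v)*t^3
        + (-(3/2)*u - (1/2)*v + (5/4)*u^2 + (1/2)*v^2 + 2*u*v)*t^2
        + (2*u^2 + v^2 - (1/2)*u^3 + u*v - u^2*v - u*v^2)*t
        + (u^2 + v^2 - (1/2)*u^3 - (1/2)*u^2*v - u*v^2 + (1/2)*u^2*v^2 + (1/8)*u^4)) := by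
    funext t; unfold H0; ring
  rw [e1, e2, e3, quartic_deriv, quartic_deriv, quartic_deriv]
  unfold h0
  ring
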